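/- Let H be an n×n Hermitian complex matrix such that I − H² is positive semidefinite, and let S denote the positive semidefinite square root of I − H². Then the block matrix U = fromBlocks(H, −S, S, H) is unitary, and for every natural number k, the top-left n×n block of U^k equals T_k(H), the evaluation at H of the k-th Chebyshev polynomial of the first kind. -/

import Mathlib

open Matrix Polynomial
open scoped ComplexOrder

/-- The positive semidefinite square root of a positive semidefinite matrix (as defined in
the older Mathlib, where it was `Matrix.PosSemidef.sqrt`). -/
noncomputable def Matrix.PosSemidef.sqrt {n : Type*} [Fintype n] [DecidableEq n]
    {A : Matrix n n ℂ} (hA : A.PosSemidef) : Matrix n n ℂ :=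
  hA.1.eigenvectorUnitary.1 * diagonal ((↑) ∘ (√·) ∘ hA.1.eigenvalues) *
    (star hA.1.eigenvectorUnitary : Matrix n n ℂ)

open scoped MatrixOrder in
lemma Matrix.PosSemidef.sqrt_eq_cfc_sqrt {n : Type*} [Fintype n] [DecidableEq n]
    {A : Matrix n n ℂ} (hA : A.PosSemidef) : hA.sqrt = CFC.sqrt A := by
  rw [CFC.sqrt_eq_real_sqrt A hA.nonneg, cfcₙ_eq_cfc (hf0 := Real.sqrt_zero), hA.1.cfc_eq]
  simp [IsHermitian.cfc, Matrix.PosSemidef.sqrt, Unitary.conjStarAlgAut_apply]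

open scoped MatrixOrder in
lemma Matrix.PosSemidef.sqrt_mul_self {n : Type*} [Fintype n] [DecidableEq n]
    {A : Matrix n n ℂ} (hA : A.PosSemidef) : hA.sqrt * hA.sqrt = A := by
  rw [hA.sqrt_eq_cfc_sqrt]; exact CFC.sqrt_mul_sqrt_self A hA.nonneg

open scoped MatrixOrder in
lemma Matrix.PosSemidef.posSemidef_sqrt {n : Type*} [Fintype n] [DecidableEq n]
    {A : Matrix n n ℂ} (hA : A.PosSemidef) : hA.sqrt.PosSemidef := by
  rw [hA.sqrt_eq_cfc_sqrt]; exact (CFC.sqrt_nonneg A).posSemidef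

open scoped MatrixOrder in
lemma Matrix.PosSemidef.eq_sqrt_of_sq_eq {n : Type*} [Fintype n] [DecidableEq n]
    {B A : Matrix n n ℂ} (hB : B.PosSemidef) (hA : A.PosSemidef) (h : B ^ 2 = A) :
    B = hA.sqrt := by
  rw [hA.sqrt_eq_cfc_sqrt]
  exact (CFC.sqrt_unique (by rw [← sq]; exact h) hB.nonneg).symm

private lemma commute_aeval' {R A : Type*} [CommSemiring R] [Semiring A] [Algebra R A]
    {a b : A} (h : Commute b a) (p : R[X]) : Commute b (aeval a p) := by
  induction p using Polynomial.induction_on' with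
  | add p q hp hq => rw [map_add]; exact hp.add_right hq
  | monomial n c =>
      rw [aeval_monomial]
      exact (Commute.symm (Algebra.commutes c b)).mul_right (h.pow_right n)

/-- Qubitization: for a Hermitian matrix `H` with `I − H²` positive semidefinite and
`S = √(I − H²)` its positive semidefinite square root, the block matrix
`U = fromBlocks(H, −S, S, H)` is unitary and the top-left block of `Uᵏ` is `T_k(H)`,
the `k`-th Chebyshev polynomial of the first kind evaluated at `H`. -/
theorem qubitization_chebyshev (n : ℕ) (H : Matrix (Fin n) (Fin n) ℂ)
    (hH : H.IsHermitian) (hpsd : (1 - H ^ 2).PosSemidef) :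
    Matrix.fromBlocks H (-hpsd.sqrt) hpsd.sqrt H ∈ Matrix.unitaryGroup (Fin n ⊕ Fin n) ℂ ∧
      ∀ k : ℕ,
        ((Matrix.fromBlocks H (-hpsd.sqrt) hpsd.sqrt H) ^ k).toBlocks₁₁ =
          (Polynomial.aeval H) (Polynomial.Chebyshev.T ℂ (k : ℤ)) := by
  set S := hpsd.sqrt with hSdef
  set V : Matrix (Fin n) (Fin n) ℂ := (hH.eigenvectorUnitary : Matrix (Fin n) (Fin n) ℂ) with hVdef
  set d := hH.eigenvalues with hddef
  have hVstar : star V * V = 1 := mem_unitaryGroup_iff'.mp hH.eigenvectorUnitary.2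
  have hVV : V * star V = 1 := mem_unitaryGroup_iff.mp hH.eigenvectorUnitary.2
  have key : ∀ f g : Fin n → ℂ, (V * diagonal f * star V) * (V * diagonal g * star V)
      = V * diagonal (fun i => f i * g i) * star V := by
    intro f g
    have e : (V * diagonal f * star V) * (V * diagonal g * star V)
        = V * (diagonal f * ((star V * V) * (diagonal g * star V))) := by
      simp only [mul_assoc]
    rw [e, hVstar, one_mul, ← mul_assoc, ← mul_assoc, mul_assoc V, diagonal_mul_diagonal]
  have hspec : H = V * diagonal (fun i => (d i : ℂ)) * star V := hH.spectral_theorem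
  have key2 : ∀ f : Fin n → ℂ, star V * (V * diagonal f * star V) * V = diagonal f := by
    intro f
    have e : star V * (V * diagonal f * star V) * V
        = (star V * V) * diagonal f * (star V * V) := by
      simp only [mul_assoc]
    rw [e, hVstar, one_mul, mul_one]
  have hH2 : H ^ 2 = V * diagonal (fun i => (d i : ℂ) ^ 2) * star V := by
    rw [pow_two]
    conv_lhs => rw [hspec]
    rw [key]
    have : (fun i => (d i : ℂ) * (d i : ℂ)) = fun i => (d i : ℂ) ^ 2 := by
      funext i; ring
    rw [this]
  -- eigenvalue bound
  have hle : ∀ i, d i ^ 2 ≤ 1 := by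
    have h2 : PosSemidef (Vᴴ * (1 - H ^ 2) * V) := hpsd.conjTranspose_mul_mul_same V
    have h3 : Vᴴ * (1 - H ^ 2) * V = diagonal (fun i => 1 - (d i : ℂ) ^ 2) := by
      simp only [← star_eq_conjTranspose]
      rw [mul_sub, mul_one, sub_mul, hVstar, hH2, key2, ← diagonal_one, diagonal_sub]
    rw [h3] at h2
    intro i
    have h5 := posSemidef_diagonal_iff.mp h2 i
    have h6 : (0 : ℂ) ≤ ((1 - d i ^ 2 : ℝ) : ℂ) := by push_cast; exact h5
    rw [Complex.zero_le_real] at h6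
    linarith
  -- the square root, realized explicitly, commutes with H
  set S₀ : Matrix (Fin n) (Fin n) ℂ :=
    V * diagonal (fun i => (Real.sqrt (1 - d i ^ 2) : ℂ)) * star V with hS0def
  have hS0psd : PosSemidef S₀ := by
    rw [hS0def, star_eq_conjTranspose]
    exact (posSemidef_diagonal_iff.mpr fun i => by
      rw [Complex.zero_le_real]; exact Real.sqrt_nonneg _).mul_mul_conjTranspose_same V
  have hS0sq : S₀ ^ 2 = 1 - H ^ 2 := by
    rw [pow_two, hS0def, key]
    have e1 : (fun i => ((Real.sqrt (1 - d i ^ 2) : ℂ)) * ((Real.sqrt (1 - d i ^ 2) : ℂ)))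
        = fun i => 1 - (d i : ℂ) ^ 2 := by
      funext i
      rw [← Complex.ofReal_mul, Real.mul_self_sqrt (by linarith [hle i])]
      push_cast; ring
    rw [e1, hH2]
    have e2 : diagonal (fun i => 1 - (d i : ℂ) ^ 2)
        = (1 : Matrix (Fin n) (Fin n) ℂ) - diagonal (fun i => (d i : ℂ) ^ 2) := by
      rw [← diagonal_one, diagonal_sub]
    rw [e2, mul_sub, sub_mul, mul_one, hVV]
  have hSS0 : S = S₀ := by
    rw [hSdef]; exact (hS0psd.eq_sqrt_of_sq_eq hpsd hS0sq).symm
  have hcommEq : H * S = S * H := by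
    rw [hSS0, hS0def]
    conv_lhs => rw [hspec]
    conv_rhs => rw [hspec]
    rw [key, key]
    have : (fun i => (d i : ℂ) * ((Real.sqrt (1 - d i ^ 2) : ℝ) : ℂ))
        = fun i => ((Real.sqrt (1 - d i ^ 2) : ℝ) : ℂ) * (d i : ℂ) := by
      funext i; ring
    rw [this]
  have hSsq' : S * S = 1 - H ^ 2 := hpsd.sqrt_mul_self
  have hSH : Sᴴ = S := hpsd.posSemidef_sqrt.isHermitian
  have hcommS : Commute S H := hcommEq.symm
  have hcommP : ∀ p : ℂ[X], S * aeval H p = aeval H p * S := fun p => commute_aeval' hcommS p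
  constructor
  · rw [mem_unitaryGroup_iff', star_eq_conjTranspose, fromBlocks_conjTranspose,
      conjTranspose_neg, hH.eq, hSH, fromBlocks_multiply]
    have h1 : H * H + S * S = 1 := by rw [hSsq', ← pow_two]; abel
    have h2 : H * -S + S * H = 0 := by rw [mul_neg, hcommEq, neg_add_cancel]
    have h3 : -S * H + H * S = 0 := by rw [neg_mul, hcommEq, neg_add_cancel]
    have h4 : -S * -S + H * H = 1 := by rw [neg_mul_neg, add_comm]; exact h1
    rw [h1, h2, h3, h4, fromBlocks_one]
  · have main : ∀ k : ℕ, (fromBlocks H (-S) S H) ^ k =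
        fromBlocks (aeval H (Chebyshev.T ℂ (k : ℤ)))
          (-(S * aeval H (Chebyshev.U ℂ ((k : ℤ) - 1))))
          (S * aeval H (Chebyshev.U ℂ ((k : ℤ) - 1)))
          (aeval H (Chebyshev.T ℂ (k : ℤ))) := by
      intro k
      induction k with
      | zero =>
          simp [Chebyshev.T_zero, Chebyshev.U_neg_one, ← fromBlocks_one]
      | succ k ih =>
          have ek : ((k + 1 : ℕ) : ℤ) = (k : ℤ) + 1 := by push_cast; ring
          obtain ⟨A, hAdef, cAH, cAS⟩ : ∃ A, A = aeval H (Chebyshev.T ℂ (k : ℤ)) ∧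
              A * H = H * A ∧ A * S = S * A :=
            ⟨_, rfl, ((commute_aeval' (Commute.refl H) _).eq).symm, (hcommP _).symm⟩
          obtain ⟨B, hBdef, cBH, cBS⟩ : ∃ B, B = aeval H (Chebyshev.U ℂ ((k : ℤ) - 1)) ∧
              B * H = H * B ∧ B * S = S * B :=
            ⟨_, rfl, ((commute_aeval' (Commute.refl H) _).eq).symm, (hcommP _).symm⟩
          have hA' : aeval H (Chebyshev.T ℂ ((k : ℤ) + 1)) = H * A - S * S * B := by
            have ht := Chebyshev.T_eq_X_mul_T_sub_pol_U ℂ ((k : ℤ) - 1)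
            rw [show (k : ℤ) - 1 + 2 = (k : ℤ) + 1 by ring,
              show (k : ℤ) - 1 + 1 = (k : ℤ) by ring] at ht
            rw [ht, map_sub, _root_.map_mul, _root_.map_mul, aeval_X, map_sub, _root_.map_one, _root_.map_pow, aeval_X,
              ← hSsq', ← hAdef, ← hBdef]
          have hB' : aeval H (Chebyshev.U ℂ (k : ℤ)) = H * B + A := by
            have hu := Chebyshev.U_eq_X_mul_U_add_T ℂ ((k : ℤ) - 1)
            rw [show (k : ℤ) - 1 + 1 = (k : ℤ) by ring] at hu
            rw [hu, map_add, _root_.map_mul, aeval_X, ← hAdef, ← hBdef]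
          rw [pow_succ, ih, ← hAdef, ← hBdef, fromBlocks_multiply, ek,
            show (k : ℤ) + 1 - 1 = (k : ℤ) by ring, hA', hB']
          have g1 : A * H + -(S * B) * S = H * A - S * S * B := by
            rw [cAH, neg_mul, mul_assoc S B S, cBS, ← mul_assoc S S B]; abel
          have g2 : A * -S + -(S * B) * H = -(S * (H * B + A)) := by
            rw [mul_neg, cAS, neg_mul, mul_assoc S B H, cBH, mul_add S (H * B) A]; abel
          have g3 : S * B * H + A * S = S * (H * B + A) := by
            rw [mul_assoc S B H, cBH, cAS, mul_add S (H * B) A]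
          have g4 : S * B * -S + A * H = H * A - S * S * B := by
            rw [mul_neg, mul_assoc S B S, cBS, ← mul_assoc S S B, cAH]; abel
          rw [g1, g2, g3, g4]
    intro k
    rw [main k, toBlocks_fromBlocks₁₁]
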